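/- (Triangle join bound, the n = 3 Loomis–Whitney bound for the query R ⋈ S ⋈ T) Let A, B, C be types and let R ⊆ A×B, S ⊆ B×C, T ⊆ A×C be finite relations. Then |{ (a,b,c) : (a,b) ∈ R, (b,c) ∈ S, (a,c) ∈ T }| ≤ √(|R|·|S|·|T|). -/

import Mathlib

open Finset

lemma triangle_key {A B C : Type*} [DecidableEq A] [DecidableEq B] [DecidableEq C]
    (R : Finset (A × B)) (S : Finset (B × C)) (T : Finset (A × C))
    (E : Finset (A × B × C))
    (hR : ∀ p ∈ E, (p.1, p.2.1) ∈ R)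
    (hS : ∀ p ∈ E, (p.2.1, p.2.2) ∈ S)
    (hT : ∀ p ∈ E, (p.1, p.2.2) ∈ T) :
    E.card ^ 2 ≤ R.card * (S.card * T.card) := by
  set f : A × B × C → A × B := fun p => (p.1, p.2.1) with hf
  set D : Finset ((A × B × C) × (A × B × C)) :=
    (E ×ˢ E).filter (fun q => f q.1 = f q.2) with hD
  have h1 : E.card = ∑ x ∈ R, (E.filter (fun p => f p = x)).card :=
    Finset.card_eq_sum_card_fiberwise hR
  have hCS : (∑ x ∈ R, (E.filter (fun p => f p = x)).card) ^ 2
      ≤ R.card * ∑ x ∈ R, (E.filter (fun p => f p = x)).card ^ 2 :=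
    sq_sum_le_card_mul_sum_sq
  have h2 : ∑ x ∈ R, (E.filter (fun p => f p = x)).card ^ 2 = D.card := by
    have := Finset.card_eq_sum_card_fiberwise
      (f := fun q : (A × B × C) × (A × B × C) => f q.1) (s := D) (t := R)
      (by intro q hq
          simp only [hD, Finset.mem_coe, Finset.mem_filter, Finset.mem_product] at hq
          exact hR q.1 hq.1.1)
    rw [this]
    refine Finset.sum_congr rfl fun x _ => ?_
    have hfib : D.filter (fun q => f q.1 = x)
        = (E.filter (fun p => f p = x)) ×ˢ (E.filter (fun p => f p = x)) := by
      ext ⟨p, q⟩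
      simp only [hD, Finset.mem_filter, Finset.mem_product]
      constructor
      · rintro ⟨⟨⟨hp, hq⟩, heq⟩, hx⟩
        exact ⟨⟨hp, hx⟩, hq, heq ▸ hx⟩
      · rintro ⟨⟨hp, hx⟩, hq, hx'⟩
        exact ⟨⟨⟨hp, hq⟩, hx.trans hx'.symm⟩, hx⟩
    rw [hfib, Finset.card_product, sq]
  have h3 : D.card ≤ S.card * T.card := by
    rw [← Finset.card_product]
    apply Finset.card_le_card_of_injOn
      (fun q => ((q.1.2.1, q.1.2.2), (q.2.1, q.2.2.2)))
    · intro q hq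
      simp only [hD, Finset.mem_coe, Finset.mem_filter, Finset.mem_product] at hq ⊢
      exact ⟨hS q.1 hq.1.1, hT q.2 hq.1.2⟩
    · rintro ⟨⟨a, b, c⟩, ⟨a', b', c'⟩⟩ hq ⟨⟨d, e, g⟩, ⟨d', e', g'⟩⟩ hq' heq
      simp only [hD, hf, Finset.mem_coe, Finset.mem_filter, Finset.mem_product,
        Prod.mk.injEq] at hq hq' heq
      obtain ⟨⟨hb, hc⟩, hd, hg⟩ := heq
      obtain ⟨-, ha1, hb1⟩ := hq
      obtain ⟨-, ha2, hb2⟩ := hq'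
      subst hb; subst hc; subst hd; subst hg
      simp_all
  calc E.card ^ 2 = (∑ x ∈ R, (E.filter (fun p => f p = x)).card) ^ 2 := by rw [h1]
    _ ≤ R.card * ∑ x ∈ R, (E.filter (fun p => f p = x)).card ^ 2 := hCS
    _ = R.card * D.card := by rw [h2]
    _ ≤ R.card * (S.card * T.card) := Nat.mul_le_mul_left _ h3

/-- **Triangle join bound** (the `n = 3` Loomis–Whitney bound for `R ⋈ S ⋈ T`).
For finite relations `R ⊆ A×B`, `S ⊆ B×C`, `T ⊆ A×C`, the triangle join
`{(a,b,c) : (a,b) ∈ R, (b,c) ∈ S, (a,c) ∈ T}` is finite and its size is at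
most `√(|R|·|S|·|T|)`. -/
theorem triangle_join_bound
    {A B C : Type*}
    (R : Finset (A × B)) (S : Finset (B × C)) (T : Finset (A × C))
    (J : Set (A × B × C))
    (hJ : J = {p : A × B × C |
      (p.1, p.2.1) ∈ R ∧ (p.2.1, p.2.2) ∈ S ∧ (p.1, p.2.2) ∈ T}) :
    J.Finite ∧
    (Nat.card J : ℝ) ≤ Real.sqrt ((R.card : ℝ) * (S.card : ℝ) * (T.card : ℝ)) := by
  classical
  set E : Finset (A × B × C) :=
    ((R ×ˢ S).filter (fun q => q.1.2 = q.2.1 ∧ (q.1.1, q.2.2) ∈ T)).image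
      (fun q => (q.1.1, q.1.2, q.2.2)) with hE
  have hJE : J = ↑E := by
    rw [hJ]
    ext ⟨a, b, c⟩
    simp only [hE, Set.mem_setOf_eq, Finset.coe_image, Set.mem_image,
      Finset.mem_coe, Finset.mem_filter, Finset.mem_product, Prod.mk.injEq]
    constructor
    · rintro ⟨h1, h2, h3⟩
      exact ⟨((a, b), (b, c)), ⟨⟨h1, h2⟩, rfl, h3⟩, rfl, rfl, rfl⟩
    · rintro ⟨⟨⟨x, y⟩, ⟨y', z⟩⟩, ⟨⟨h1, h2⟩, he, h3⟩, rfl, rfl, rfl⟩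
      simp only at h1 h2 h3 he ⊢
      exact ⟨h1, he ▸ h2, h3⟩
  have hmem : ∀ p : A × B × C, p ∈ E ↔
      (p.1, p.2.1) ∈ R ∧ (p.2.1, p.2.2) ∈ S ∧ (p.1, p.2.2) ∈ T := by
    intro p
    rw [← Finset.mem_coe, ← hJE, hJ]
    exact Iff.rfl
  have hkey : E.card ^ 2 ≤ R.card * (S.card * T.card) :=
    triangle_key R S T E (fun p hp => ((hmem p).1 hp).1)
      (fun p hp => ((hmem p).1 hp).2.1) (fun p hp => ((hmem p).1 hp).2.2)
  refine ⟨hJE ▸ E.finite_toSet, ?_⟩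
  have hcard : Nat.card J = E.card := by rw [hJE]; simp
  rw [hcard]
  have h1 : ((E.card : ℝ)) ^ 2 ≤ (R.card : ℝ) * (S.card : ℝ) * (T.card : ℝ) := by
    rw [mul_assoc]
    exact_mod_cast hkey
  calc (E.card : ℝ) = Real.sqrt ((E.card : ℝ) ^ 2) := by
        rw [Real.sqrt_sq (by positivity)]
    _ ≤ _ := Real.sqrt_le_sqrt h1
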